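/- Suppose Q'(r) ≠ 0 for every r ∈ [r_i, r_o] (so Q' has no zero in the closed annular gap). Then G(r) = 0 for all r ∈ [r_i, r_o]; that is, the Rayleigh-type equation admits no nontrivial solution with Im c ≠ 0. (This is the extension of Rayleigh's inflection-point theorem to axisymmetric base flows.) -/

import Mathlib

open Real MeasureTheory

/-- Extension of Rayleigh's inflection-point theorem to axisymmetric base
flows: if `Q'` has no zero in the closed annular gap `[ri, ro]`, then the
Rayleigh-type equation admits no nontrivial solution with `Im c ≠ 0`. -/
theorem stmt_3
    (ri ro : ℝ) (hri : 0 < ri) (hio : ri < ro)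
    (N k : ℝ) (hN : 0 ≤ N) (hk : 0 < k)
    (c : ℂ) (hc : c.im ≠ 0)
    (U Q : ℝ → ℝ)
    (hU : ContDiffOn ℝ 2 U (Set.Icc ri ro))
    (hQ : ∀ r, Q r = -(r * deriv U r) / (N ^ 2 + r ^ 2))
    (hQ'cont : ContinuousOn (deriv Q) (Set.Icc ri ro))
    (G : ℝ → ℂ)
    (hG : ContDiffOn ℝ 2 G (Set.Icc ri ro))
    (hGi : G ri = 0) (hGo : G ro = 0)
    (heq : ∀ r ∈ Set.Icc ri ro,
      deriv (fun s : ℝ => ((s / (N ^ 2 + s ^ 2) : ℝ) : ℂ) *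
          deriv (fun t : ℝ => (t : ℂ) * G t) s) r
        - (k : ℂ) ^ 2 * G r
        + ((deriv Q r : ℝ) : ℂ) / ((U r : ℂ) - c) * ((r : ℂ) * G r) = 0)
    (hQ'ne : ∀ r ∈ Set.Icc ri ro, deriv Q r ≠ 0) :
    ∀ r ∈ Set.Icc ri ro, G r = 0 := by
  have hsU : UniqueDiffOn ℝ (Set.Icc ri ro) := uniqueDiffOn_Icc hio
  set F : ℝ → ℂ := fun t : ℝ => (t : ℂ) * G t with hF_def
  set F' : ℝ → ℂ := derivWithin F (Set.Icc ri ro) with hF'_def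
  have hden : ∀ r ∈ Set.Icc ri ro, N ^ 2 + r ^ 2 ≠ 0 := by
    intro r hr
    have : 0 < r := lt_of_lt_of_le hri hr.1
    positivity
  have hUc : ∀ r : ℝ, ((U r : ℂ) - c) ≠ 0 := by
    intro r h
    apply hc
    have := congrArg Complex.im h
    simpa using this.symm
  have hnsq : ∀ r : ℝ, Complex.normSq ((U r : ℂ) - c) ≠ 0 := fun r => by
    simpa [Complex.normSq_eq_zero] using hUc r
  -- smoothness of F
  have hFc : ContDiffOn ℝ 2 F (Set.Icc ri ro) := by
    apply ContDiffOn.mul _ hG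
    exact Complex.ofRealCLM.contDiff.contDiffOn
  have hFcont : ContinuousOn F (Set.Icc ri ro) := hFc.continuousOn
  have hF'cont : ContinuousOn F' (Set.Icc ri ro) :=
    hFc.continuousOn_derivWithin hsU (by norm_num)
  -- the continuous complex integrand
  set E : ℝ → ℂ := fun r =>
    ((k : ℂ) ^ 2 * G r - ((deriv Q r : ℝ) : ℂ) / ((U r : ℂ) - c) * F r) * star (F r)
      + ((r / (N ^ 2 + r ^ 2) : ℝ) : ℂ) * F' r * star (F' r) with hE_def
  set H : ℝ → ℂ := fun r =>
    ((r / (N ^ 2 + r ^ 2) : ℝ) : ℂ) * F' r * star (F r) with hH_def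
  have hUcc : ContinuousOn (fun r => (U r : ℂ) - c) (Set.Icc ri ro) :=
    (Complex.continuous_ofReal.comp_continuousOn hU.continuousOn).sub continuousOn_const
  have hφcont : ContinuousOn (fun r : ℝ => ((r / (N ^ 2 + r ^ 2) : ℝ) : ℂ)) (Set.Icc ri ro) := by
    apply Complex.continuous_ofReal.comp_continuousOn
    exact ContinuousOn.div continuousOn_id (by fun_prop) hden
  have hGc : ContinuousOn G (Set.Icc ri ro) := hG.continuousOn
  have hEcont : ContinuousOn E (Set.Icc ri ro) := by
    apply ContinuousOn.add
    · apply ContinuousOn.mul _ hFcont.star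
      apply ContinuousOn.sub (continuousOn_const.mul hGc)
      exact (((Complex.continuous_ofReal.comp_continuousOn hQ'cont).div hUcc
        (fun r _ => hUc r)).mul hFcont)
    · exact (hφcont.mul hF'cont).mul hF'cont.star
  have hHcont : ContinuousOn H (Set.Icc ri ro) := (hφcont.mul hF'cont).mul hFcont.star
  -- H has derivative E on the open interval
  have hderiv : ∀ r ∈ Set.Ioo ri ro, HasDerivAt H (E r) r := by
    intro r hr
    have hrs : r ∈ Set.Icc ri ro := Set.Ioo_subset_Icc_self hr
    have hnhds : Set.Icc ri ro ∈ nhds r := Icc_mem_nhds hr.1 hr.2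
    have hF2 : ContDiffOn ℝ 2 F (Set.Ioo ri ro) := hFc.mono Set.Ioo_subset_Icc_self
    have hdF : ContDiffOn ℝ 1 (deriv F) (Set.Ioo ri ro) :=
      hF2.deriv_of_isOpen isOpen_Ioo (by norm_num)
    have hdFr : DifferentiableAt ℝ (deriv F) r :=
      (hdF.differentiableOn (by norm_num)).differentiableAt (isOpen_Ioo.mem_nhds hr)
    have hFd : DifferentiableAt ℝ F r :=
      (hF2.differentiableOn (by norm_num)).differentiableAt (isOpen_Ioo.mem_nhds hr)
    set W : ℝ → ℂ := fun u : ℝ =>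
      ((u / (N ^ 2 + u ^ 2) : ℝ) : ℂ) * deriv F u with hW_def
    have hφd : DifferentiableAt ℝ (fun u : ℝ => ((u / (N ^ 2 + u ^ 2) : ℝ) : ℂ)) r := by
      apply Complex.ofRealCLM.differentiableAt.comp
      apply DifferentiableAt.div differentiableAt_id (by fun_prop)
      exact hden r hrs
    have hWd : DifferentiableAt ℝ W r := hφd.mul hdFr
    have hW : HasDerivAt W (deriv W r) r := hWd.hasDerivAt
    have hWval : deriv W r
        = (k : ℂ) ^ 2 * G r - ((deriv Q r : ℝ) : ℂ) / ((U r : ℂ) - c) * F r := by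
      have h := heq r hrs
      have hFr : F r = (r : ℂ) * G r := rfl
      rw [hFr]
      linear_combination h
    have hconj : HasDerivAt (fun t => star (F t)) (star (deriv F r)) r :=
      hFd.hasDerivAt.star
    have hprod : HasDerivAt (fun t => W t * star (F t))
        (deriv W r * star (F r) + W r * star (deriv F r)) r := hW.mul hconj
    have hEqOn : H =ᶠ[nhds r] fun t => W t * star (F t) := by
      filter_upwards [isOpen_Ioo.mem_nhds hr] with t ht
      have h1 : F' t = deriv F t := derivWithin_of_mem_nhds (Icc_mem_nhds ht.1 ht.2)
      simp only [hH_def, hW_def, h1]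
    have hmain : HasDerivAt H (deriv W r * star (F r) + W r * star (deriv F r)) r :=
      hprod.congr_of_eventuallyEq hEqOn
    have hFr' : F' r = deriv F r := derivWithin_of_mem_nhds hnhds
    convert hmain using 1
    rw [hWval, hE_def, hW_def]
    simp only [hFr']
  -- FTC: the integral of E vanishes
  have hEint : IntervalIntegrable E volume ri ro := by
    apply ContinuousOn.intervalIntegrable
    rwa [Set.uIcc_of_le hio.le]
  have key : (∫ r in ri..ro, E r) = 0 := by
    rw [intervalIntegral.integral_eq_sub_of_hasDerivAt_of_le hio.le hHcont hderiv hEint]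
    have hFi : F ri = 0 := by simp [hF_def, hGi]
    have hFo : F ro = 0 := by simp [hF_def, hGo]
    simp [hH_def, hFi, hFo]
  -- imaginary part
  set g : ℝ → ℝ := fun r =>
    deriv Q r * c.im / Complex.normSq ((U r : ℂ) - c) * Complex.normSq (F r) with hg_def
  have hEim : ∀ r : ℝ, (E r).im = -g r := by
    intro r
    have hns := hnsq r
    simp only [hE_def, hg_def, hF_def, Complex.star_def, Complex.add_im, Complex.mul_im,
      Complex.mul_re, Complex.sub_im, Complex.sub_re, Complex.ofReal_re, Complex.ofReal_im,
      Complex.conj_re, Complex.conj_im, Complex.div_im, Complex.div_re,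
      Complex.normSq_apply, Complex.ofReal_pow, pow_two]
    field_simp
    ring
  have him : (∫ r in ri..ro, (E r).im) = 0 := by
    have h2 := Complex.imCLM.intervalIntegral_comp_comm hEint
    simpa [key] using h2
  have hgint : (∫ r in ri..ro, g r) = 0 := by
    have : (∫ r in ri..ro, (E r).im) = ∫ r in ri..ro, -g r := by
      apply intervalIntegral.integral_congr
      intro x _
      exact hEim x
    rw [intervalIntegral.integral_neg] at this
    rw [this] at him
    linarith
  have hgcont : ContinuousOn g (Set.Icc ri ro) := by
    apply ContinuousOn.mul
    · exact ((hQ'cont.mul continuousOn_const).div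
        (Complex.continuous_normSq.comp_continuousOn hUcc) (fun r _ => hnsq r))
    · exact Complex.continuous_normSq.comp_continuousOn hFcont
  -- sign dichotomy of h
  set hfun : ℝ → ℝ := fun r => deriv Q r * c.im / Complex.normSq ((U r : ℂ) - c) with hh_def
  have hhcont : ContinuousOn hfun (Set.Icc ri ro) :=
    (hQ'cont.mul continuousOn_const).div
      (Complex.continuous_normSq.comp_continuousOn hUcc) (fun r _ => hnsq r)
  have hhne : ∀ r ∈ Set.Icc ri ro, hfun r ≠ 0 := by
    intro r hr
    exact div_ne_zero (mul_ne_zero (hQ'ne r hr) hc) (hnsq r)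
  have hsign : (∀ r ∈ Set.Icc ri ro, 0 < hfun r) ∨ (∀ r ∈ Set.Icc ri ro, hfun r < 0) := by
    by_contra hcon
    push_neg at hcon
    obtain ⟨⟨a, ha, ha'⟩, ⟨b, hb, hb'⟩⟩ := hcon
    have ha2 : hfun a ≤ 0 := ha'
    have hb2 : 0 < hfun b := lt_of_le_of_ne hb' (Ne.symm (hhne b hb))
    have ha3 : hfun a < 0 := lt_of_le_of_ne ha2 (hhne a ha)
    have hsub : Set.uIcc a b ⊆ Set.Icc ri ro := by
      rw [← Set.uIcc_of_le hio.le]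
      apply Set.uIcc_subset_uIcc <;> rw [Set.uIcc_of_le hio.le]
      exacts [ha, hb]
    have hIVT := intermediate_value_uIcc (hhcont.mono hsub)
    have h0 : (0 : ℝ) ∈ Set.uIcc (hfun a) (hfun b) :=
      Set.mem_uIcc.mpr (Or.inl ⟨ha3.le, hb2.le⟩)
    obtain ⟨t, ht, ht0⟩ := hIVT h0
    exact hhne t (hsub ht) ht0
  -- conclusion
  intro r hr
  by_contra hGr
  have hFne : F r ≠ 0 :=
    mul_ne_zero (Complex.ofReal_ne_zero.mpr (lt_of_lt_of_le hri hr.1).ne') hGr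
  have hFpos : 0 < Complex.normSq (F r) := Complex.normSq_pos.mpr hFne
  have hgfun : ∀ x, g x = hfun x * Complex.normSq (F x) := fun x => rfl
  rcases hsign with hp | hn
  · have hpos : 0 < ∫ x in ri..ro, g x := by
      apply intervalIntegral.integral_pos hio hgcont
      · intro x hx
        rw [hgfun]
        exact mul_nonneg (hp x (Set.Ioc_subset_Icc_self hx)).le (Complex.normSq_nonneg _)
      · exact ⟨r, hr, by rw [hgfun]; exact mul_pos (hp r hr) hFpos⟩
    rw [hgint] at hpos
    exact lt_irrefl 0 hpos
  · have hpos : 0 < ∫ x in ri..ro, -g x := by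
      apply intervalIntegral.integral_pos hio hgcont.neg
      · intro x hx
        rw [Pi.neg_apply, hgfun]
        have := hn x (Set.Ioc_subset_Icc_self hx)
        nlinarith [Complex.normSq_nonneg (F x)]
      · refine ⟨r, hr, ?_⟩
        rw [Pi.neg_apply, hgfun]
        nlinarith [hn r hr]
    rw [intervalIntegral.integral_neg, hgint] at hpos
    simp at hpos
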